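/- Correctness of the reduction from punctual reachability games to reachability games on increasing temporal graphs: let G = (V, E) be a static game with V partitioned into V₁, V₂, let v ∈ V be a vertex with no outgoing edges, and let T ∈ ℕ. Define the temporal game G' on V' = V ∪ {w, ⊤, ⊥} (three fresh vertices) with V'₁ = V₁ ∪ {v} and V'₂ = V' ∖ V'₁ (so w, ⊤, ⊥ ∈ V'₂), and edge availabilities: for each (s,t) ∈ E, s →_x t at all times x; v →_x ⊥ at all times; v →_x w iff x ≥ T; w →_x ⊤ at all times; w →_x ⊥ iff x ≥ T+2; ⊤ and ⊥ have no outgoing edges. Then every edge of G' is increasing, and for every u ∈ V: Player 1 wins the temporal reachability game on G' with target set {⊤} from position (u, 0) if and only if Player 1 wins the punctual reachability game on G with target vertex v and target time T from u. -/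

import Mathlib

/-!
A temporal graph: vertex set `V`, time-indexed edge relation `E t u v` (edge from `u` to `v`
available at time `t`).  `P1 v` means vertex `v` is controlled by Player 1.  A play from
position `(u,k)` is a maximal sequence of positions `(v₀,k), (v₁,k+1), …` following available
edges, where the owner of the current vertex chooses the next one; the play halts at a
position whose owner has no available edge.

`P1WinsReach E P1 F u k` : Player 1 wins the reachability game with target set `F` from
position `(u, k)`, i.e. she has a strategy (assigning to each position `(v,t)` with `v ∈ V₁`
that has at least one available edge an available successor) such that every maximal play
from `(u,k)` consistent with it — infinite, or halting at a position with no available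
edge — visits `F`.
-/
def P1WinsReach {V : Type*} (E : ℕ → V → V → Prop) (P1 : V → Prop) (F : Set V)
    (u : V) (k : ℕ) : Prop :=
  ∃ σ : V → ℕ → V,
    (∀ (v : V) (t : ℕ), k ≤ t → P1 v → (∃ w, E t v w) → E t v (σ v t)) ∧
    (∀ ρ : ℕ → V, ρ 0 = u →
      (∀ i, E (k + i) (ρ i) (ρ (i + 1))) →
      (∀ i, P1 (ρ i) → ρ (i + 1) = σ (ρ i) (k + i)) →
      ∃ i, ρ i ∈ F) ∧
    (∀ (ρ : ℕ → V) (n : ℕ), ρ 0 = u →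
      (∀ i < n, E (k + i) (ρ i) (ρ (i + 1))) →
      (∀ i < n, P1 (ρ i) → ρ (i + 1) = σ (ρ i) (k + i)) →
      (∀ w, ¬ E (k + n) (ρ n) w) →
      ∃ i ≤ n, ρ i ∈ F)

/-!
`PunctualWins Es P1 v T u` : in the punctual reachability game on the static game with
edge relation `Es` (Player-1 vertices given by `P1`), target vertex `v` and target time
`T`, Player 1 wins from `u`: she has a strategy (assigning to each position `(s,t)` with
`s ∈ V₁` that has an outgoing edge one of its successors) such that every maximal play
from `u` at time `0` consistent with it — infinite, or halting at a vertex with no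
outgoing edge — visits `v` at time exactly `T`.
-/
def PunctualWins {V : Type*} (Es : V → V → Prop) (P1 : V → Prop) (v : V) (T : ℕ)
    (u : V) : Prop :=
  ∃ σ : V → ℕ → V,
    (∀ (s : V) (t : ℕ), P1 s → (∃ w, Es s w) → Es s (σ s t)) ∧
    (∀ ρ : ℕ → V, ρ 0 = u →
      (∀ i, Es (ρ i) (ρ (i + 1))) →
      (∀ i, P1 (ρ i) → ρ (i + 1) = σ (ρ i) i) →
      ρ T = v) ∧
    (∀ (ρ : ℕ → V) (n : ℕ), ρ 0 = u →
      (∀ i < n, Es (ρ i) (ρ (i + 1))) →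
      (∀ i < n, P1 (ρ i) → ρ (i + 1) = σ (ρ i) i) →
      (∀ w, ¬ Es (ρ n) w) →
      T ≤ n ∧ ρ T = v)

/-!
Reduction from a punctual reachability game on a static game `G = (V, Es)` with target
vertex `v` (having no outgoing edges) and target time `T` to a reachability game on an
increasing temporal graph `G'`.  The vertex set of `G'` is `V ⊕ Fin 3`, with the three
fresh vertices `w = Sum.inr 0`, `⊤ = Sum.inr 1`, `⊥ = Sum.inr 2`.

Edge availabilities (`incE`): for each edge `(s,t)` of `G`, `s →_x t` at all times `x`;
`v →_x ⊥` at all times; `v →_x w` iff `x ≥ T`; `w →_x ⊤` at all times; `w →_x ⊥` iff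
`x ≥ T+2`; `⊤` and `⊥` have no outgoing edges.

Ownership (`incP1`): `V'₁ = V₁ ∪ {v}`, and `w, ⊤, ⊥` all belong to `V'₂`.
-/
def incE {V : Type*} (Es : V → V → Prop) (v : V) (T : ℕ) :
    ℕ → (V ⊕ Fin 3) → (V ⊕ Fin 3) → Prop := fun x a b =>
  match a, b with
  | Sum.inl s, Sum.inl t => Es s t
  | Sum.inl s, Sum.inr j => s = v ∧ (j = (2 : Fin 3) ∨ (j = (0 : Fin 3) ∧ T ≤ x))
  | Sum.inr j, Sum.inr j' =>
      j = (0 : Fin 3) ∧ (j' = (1 : Fin 3) ∨ (j' = (2 : Fin 3) ∧ T + 2 ≤ x))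
  | Sum.inr _, Sum.inl _ => False

def incP1 {V : Type*} (P1 : V → Prop) (v : V) : (V ⊕ Fin 3) → Prop := fun a =>
  match a with
  | Sum.inl s => P1 s ∨ s = v
  | Sum.inr _ => False

section AuxReduction

variable {V : Type*} {Es : V → V → Prop} {v : V} {T : ℕ}

/-- An edge out of `Sum.inr j` forces `j = 0` and the target to be `⊤` or (late) `⊥`. -/
lemma incE_inr_src {x : ℕ} {j : Fin 3} {b : V ⊕ Fin 3} (h : incE Es v T x (Sum.inr j) b) :
    j = 0 ∧ ∃ j' : Fin 3, b = Sum.inr j' ∧ (j' = 1 ∨ (j' = 2 ∧ T + 2 ≤ x)) := by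
  cases b with
  | inl t => exact h.elim
  | inr j' => exact ⟨h.1, j', rfl, h.2⟩

/-- An edge from `Sum.inl s` to `Sum.inr j` forces `s = v`. -/
lemma incE_inl_inr {x : ℕ} {s : V} {j : Fin 3} (h : incE Es v T x (Sum.inl s) (Sum.inr j)) :
    s = v ∧ (j = 2 ∨ (j = 0 ∧ T ≤ x)) := h

end AuxReduction

/-- Correctness of the reduction from punctual reachability games to reachability games on
increasing temporal graphs: every edge of `G'` is increasing, and for every `u ∈ V`,
Player 1 wins the temporal reachability game on `G'` with target set `{⊤}` from `(u, 0)`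
iff she wins the punctual reachability game on `G` with target vertex `v` and target
time `T` from `u`. -/
theorem punctual_to_increasing_reduction
    {V : Type*} (Es : V → V → Prop) (P1 : V → Prop) (v : V)
    (hv : ∀ t : V, ¬ Es v t) (T : ℕ) :
    (∀ (a b : V ⊕ Fin 3) (x : ℕ), incE Es v T x a b → incE Es v T (x + 1) a b) ∧
    (∀ u : V,
      P1WinsReach (incE Es v T) (incP1 P1 v) {Sum.inr (1 : Fin 3)} (Sum.inl u) 0 ↔
      PunctualWins Es P1 v T u) := by
  classical
  constructor
  · -- increasing
    rintro (s | j) (t | j') x h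
    · exact h
    · exact ⟨h.1, h.2.elim Or.inl (fun hh => Or.inr ⟨hh.1, by omega⟩)⟩
    · exact h.elim
    · exact ⟨h.1, h.2.elim Or.inl (fun hh => Or.inr ⟨hh.1, by omega⟩)⟩
  intro u
  constructor
  · -- temporal winning → punctual winning
    rintro ⟨σ', hσ', hinf, hfin⟩
    refine ⟨fun s t => Sum.elim id (fun _ => s) (σ' (Sum.inl s) t), ?_, ?_, ?_⟩
    · -- strategy validity
      rintro s t hP1 ⟨w, hw⟩
      have hsv : s ≠ v := fun h => hv w (h ▸ hw)
      have hval : incE Es v T t (Sum.inl s) (σ' (Sum.inl s) t) :=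
        hσ' (Sum.inl s) t (Nat.zero_le t) (Or.inl hP1) ⟨Sum.inl w, hw⟩
      rcases hst : σ' (Sum.inl s) t with t' | j
      · rw [hst] at hval; simpa [hst] using (show Es s t' from hval)
      · rw [hst] at hval; exact absurd (incE_inl_inr hval).1 hsv
    · -- infinite plays
      intro ρ h0 hE hC
      exfalso
      have hlift := hinf (fun i => Sum.inl (ρ i)) (by beta_reduce; rw [h0]) (fun i => hE i) ?_
      · obtain ⟨i, hi⟩ := hlift
        rw [Set.mem_singleton_iff] at hi
        exact absurd hi (by simp)
      · intro i hP1i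
        beta_reduce
        rw [Nat.zero_add]
        have hP1i' : P1 (ρ i) ∨ ρ i = v := hP1i
        rcases hP1i' with hP | hveq
        · have hne : ρ i ≠ v := fun h => hv (ρ (i+1)) (h ▸ hE i)
          have hval : incE Es v T i (Sum.inl (ρ i)) (σ' (Sum.inl (ρ i)) i) :=
            hσ' _ _ (Nat.zero_le _) (Or.inl hP) ⟨Sum.inl (ρ (i+1)), hE i⟩
          rcases hst : σ' (Sum.inl (ρ i)) i with t' | j
          · have h2 := hC i hP
            simp only [hst, Sum.elim_inl, id_eq] at h2
            rw [h2]
          · rw [hst] at hval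
            exact absurd (incE_inl_inr hval).1 hne
        · exact absurd (hveq ▸ hE i) (hv _)
    · -- halting plays
      intro ρ n h0 hE hC hstop
      -- consistency of the lifted play, up to n
      have hCons : ∀ i < n, incP1 P1 v (Sum.inl (ρ i)) →
          Sum.inl (ρ (i+1)) = σ' (Sum.inl (ρ i)) (0 + i) := by
        intro i hin hP1i
        rw [Nat.zero_add]
        have hP1i' : P1 (ρ i) ∨ ρ i = v := hP1i
        rcases hP1i' with hP | hveq
        · have hne : ρ i ≠ v := fun h => hv (ρ (i+1)) (h ▸ hE i hin)
          have hval : incE Es v T i (Sum.inl (ρ i)) (σ' (Sum.inl (ρ i)) i) :=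
            hσ' _ _ (Nat.zero_le _) (Or.inl hP) ⟨Sum.inl (ρ (i+1)), hE i hin⟩
          rcases hst : σ' (Sum.inl (ρ i)) i with t' | j
          · have h2 := hC i hin hP
            simp only [hst, Sum.elim_inl, id_eq] at h2
            rw [h2]
          · rw [hst] at hval
            exact absurd (incE_inl_inr hval).1 hne
        · exact absurd (hveq ▸ hE i hin) (hv _)
      by_cases hnv : ρ n = v
      · -- play reached v at time n
        have hval : incE Es v T n (Sum.inl v) (σ' (Sum.inl v) n) :=
          hσ' _ _ (Nat.zero_le _) (Or.inr rfl) ⟨Sum.inr 2, ⟨rfl, Or.inl rfl⟩⟩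
        rcases hsn : σ' (Sum.inl v) n with t' | j
        · rw [hsn] at hval; exact absurd hval (hv t')
        · rw [hsn] at hval
          rcases (incE_inl_inr hval).2 with hj2 | ⟨hj0, hTn⟩
          · -- the strategy would move to ⊥ : contradiction with temporal winning
            exfalso
            subst hj2
            have hbad := hfin (fun i => if i ≤ n then Sum.inl (ρ i) else Sum.inr 2) (n+1)
              (by beta_reduce; rw [if_pos (Nat.zero_le n), h0]) ?_ ?_ ?_
            · obtain ⟨i, hile, hi⟩ := hbad
              rw [Set.mem_singleton_iff] at hi
              by_cases h : i ≤ n <;> simp [h] at hi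
            · intro i hi
              beta_reduce
              by_cases h : i < n
              · rw [if_pos (Nat.le_of_lt h), if_pos (Nat.succ_le_of_lt h)]
                exact hE i h
              · have hieq : i = n := by omega
                subst hieq
                rw [if_pos (le_refl i), if_neg (by omega)]
                exact ⟨hnv, Or.inl rfl⟩
            · intro i hi hP1i
              beta_reduce at hP1i ⊢
              by_cases h : i < n
              · rw [if_pos (Nat.le_of_lt h)] at hP1i
                rw [if_pos (Nat.le_of_lt h), if_pos (Nat.succ_le_of_lt h)]
                exact hCons i h hP1i
              · have hieq : i = n := by omega
                subst hieq
                rw [if_pos (le_refl i), if_neg (by omega), hnv, Nat.zero_add, hsn]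
            · intro w hw
              beta_reduce at hw
              rw [if_neg (by omega)] at hw
              exact absurd (incE_inr_src hw).1 (by decide)
          · -- strategy moves to w, so T ≤ n; show n = T
            subst hj0
            refine ⟨hTn, ?_⟩
            by_cases hTn' : T = n
            · exact hTn' ▸ hnv
            · exfalso
              have hTlt : T < n := lt_of_le_of_ne hTn hTn'
              have hbad := hfin
                (fun i => if i ≤ n then Sum.inl (ρ i) else if i = n+1 then Sum.inr 0 else Sum.inr 2)
                (n+2) (by beta_reduce; rw [if_pos (Nat.zero_le n), h0]) ?_ ?_ ?_
              · obtain ⟨i, hile, hi⟩ := hbad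
                rw [Set.mem_singleton_iff] at hi
                by_cases h : i ≤ n
                · simp [h] at hi
                · by_cases h' : i = n+1 <;> simp [h, h'] at hi
              · intro i hi
                beta_reduce
                by_cases h : i < n
                · rw [if_pos (Nat.le_of_lt h), if_pos (Nat.succ_le_of_lt h)]
                  exact hE i h
                · by_cases h' : i = n
                  · subst h'
                    rw [if_pos (le_refl i), if_neg (by omega), if_pos rfl]
                    exact ⟨hnv, Or.inr ⟨rfl, by omega⟩⟩
                  · have hieq : i = n+1 := by omega
                    subst hieq
                    rw [if_neg (by omega), if_pos rfl, if_neg (by omega), if_neg (by omega)]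
                    exact ⟨rfl, Or.inr ⟨rfl, by omega⟩⟩
              · intro i hi hP1i
                beta_reduce at hP1i ⊢
                by_cases h : i < n
                · rw [if_pos (Nat.le_of_lt h)] at hP1i
                  rw [if_pos (Nat.le_of_lt h), if_pos (Nat.succ_le_of_lt h)]
                  exact hCons i h hP1i
                · by_cases h' : i = n
                  · subst h'
                    rw [if_pos (le_refl i), if_neg (by omega), if_pos rfl, hnv,
                      Nat.zero_add, hsn]
                  · have hieq : i = n+1 := by omega
                    subst hieq
                    rw [if_neg (by omega), if_pos rfl] at hP1i
                    exact hP1i.elim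
              · intro w hw
                beta_reduce at hw
                rw [if_neg (by omega), if_neg (by omega)] at hw
                exact absurd (incE_inr_src hw).1 (by decide)
      · -- the halting vertex is not v : simulate directly
        have hbad := hfin (fun i => Sum.inl (ρ i)) n (by beta_reduce; rw [h0])
          (fun i hi => hE i hi) (fun i hi => hCons i hi) ?_
        · obtain ⟨i, hile, hi⟩ := hbad
          rw [Set.mem_singleton_iff] at hi
          exact absurd hi (by simp)
        · rintro (t' | j) hw
          · exact hstop t' hw
          · exact hnv (incE_inl_inr hw).1
  · -- punctual winning → temporal winning
    rintro ⟨σ, hσ, hinf, hfin⟩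
    refine ⟨fun a t => Sum.elim
        (fun s => if s = v then (if t = T then Sum.inr 0 else Sum.inr 2) else Sum.inl (σ s t))
        (fun _ => Sum.inr 1) a, ?_, ?_, ?_⟩
    · -- strategy validity
      rintro (s | j) t - hP1 hex
      · beta_reduce
        rw [Sum.elim_inl]
        by_cases hs : s = v
        · subst hs
          by_cases ht : t = T
          · rw [if_pos rfl, if_pos ht]
            exact ⟨rfl, Or.inr ⟨rfl, ht.ge⟩⟩
          · rw [if_pos rfl, if_neg ht]
            exact ⟨rfl, Or.inl rfl⟩
        · rw [if_neg hs]
          have hP : P1 s := hP1.resolve_right hs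
          obtain ⟨b, hb⟩ := hex
          rcases b with w | j
          · exact hσ s t hP ⟨w, hb⟩
          · exact absurd (incE_inl_inr hb).1 hs
      · exact hP1.elim
    · -- infinite plays
      intro ρ' h0 hE hC
      by_contra hno
      push_neg at hno
      simp only [Set.mem_singleton_iff] at hno
      -- every position stays in V
      have key : ∀ i, ∃ s, ρ' i = Sum.inl s := by
        intro i
        induction i with
        | zero => exact ⟨u, h0⟩
        | succ i ih =>
          obtain ⟨s, hs⟩ := ih
          rcases h1 : ρ' (i+1) with t' | j
          · exact ⟨t', rfl⟩
          · exfalso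
            have he := hE i
            rw [hs, h1] at he
            rcases (incE_inl_inr he).2 with hj2 | ⟨hj0, -⟩
            · subst hj2
              have he2 := hE (i+1)
              rw [h1] at he2
              exact absurd (incE_inr_src he2).1 (by decide)
            · subst hj0
              have he2 := hE (i+1)
              rw [h1] at he2
              obtain ⟨-, j', hj', hj'2⟩ := incE_inr_src he2
              rcases hj'2 with h1' | ⟨h2', -⟩
              · exact hno (i+2) (h1' ▸ hj')
              · subst h2'
                have he3 := hE (i+2)
                rw [hj'] at he3
                exact absurd (incE_inr_src he3).1 (by decide)
      set ρ : ℕ → V := fun i => Sum.elim id (fun _ => u) (ρ' i) with hρdef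
      have hρ : ∀ i, ρ' i = Sum.inl (ρ i) := by
        intro i; obtain ⟨s, hs⟩ := key i; rw [hs]; simp [hρdef, hs]
      have hE' : ∀ i, Es (ρ i) (ρ (i+1)) := by
        intro i
        have h2 := hE i
        rw [hρ i, hρ (i+1)] at h2
        exact h2
      have hC' : ∀ i, P1 (ρ i) → ρ (i+1) = σ (ρ i) i := by
        intro i hP
        have hne : ρ i ≠ v := fun h => hv (ρ (i+1)) (h ▸ hE' i)
        have h2 := hC i (by rw [hρ i]; exact Or.inl hP)
        rw [hρ i, hρ (i+1)] at h2
        simp only [Sum.elim_inl, if_neg hne, Nat.zero_add] at h2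
        exact Sum.inl_injective h2
      have h0' : ρ 0 = u := by
        have h2 := hρ 0
        rw [h0] at h2
        exact (Sum.inl_injective h2).symm
      have hρT := hinf ρ h0' hE' hC'
      exact hv (ρ (T+1)) (hρT ▸ hE' T)
    · -- halting plays
      intro ρ' n h0 hE hC hstop
      by_contra hno
      push_neg at hno
      simp only [Set.mem_singleton_iff] at hno
      by_cases hall : ∀ i ≤ n, ∃ s, ρ' i = Sum.inl s
      · -- the play stays in V up to the halting point
        set ρ : ℕ → V := fun i => Sum.elim id (fun _ => u) (ρ' i) with hρdef
        have hρ : ∀ i ≤ n, ρ' i = Sum.inl (ρ i) := by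
          intro i hi; obtain ⟨s, hs⟩ := hall i hi; rw [hs]; simp [hρdef, hs]
        have hE' : ∀ i < n, Es (ρ i) (ρ (i+1)) := by
          intro i hi
          have h2 := hE i hi
          rw [hρ i (Nat.le_of_lt hi), hρ (i+1) hi] at h2
          exact h2
        have hC' : ∀ i < n, P1 (ρ i) → ρ (i+1) = σ (ρ i) i := by
          intro i hi hP
          have hne : ρ i ≠ v := fun h => hv (ρ (i+1)) (h ▸ hE' i hi)
          have h2 := hC i hi (by rw [hρ i (Nat.le_of_lt hi)]; exact Or.inl hP)
          rw [hρ i (Nat.le_of_lt hi), hρ (i+1) hi] at h2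
          simp only [Sum.elim_inl, if_neg hne, Nat.zero_add] at h2
          exact Sum.inl_injective h2
        have h0' : ρ 0 = u := by
          have h2 := hρ 0 (Nat.zero_le n)
          rw [h0] at h2
          exact (Sum.inl_injective h2).symm
        have hstop' : ∀ w, ¬ Es (ρ n) w := by
          intro w hw
          exact hstop (Sum.inl w) (by rw [hρ n (le_refl n)]; exact hw)
        obtain ⟨hTn, hρT⟩ := hfin ρ n h0' hE' hC' hstop'
        rcases lt_or_eq_of_le hTn with hlt | heq
        · exact hv (ρ (T+1)) (hρT ▸ hE' T hlt)
        · -- ρ n = v, but then v still has an available edge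
          have hnv : ρ n = v := heq ▸ hρT
          exact hstop (Sum.inr 2) (by
            rw [hρ n (le_refl n), hnv]
            exact ⟨rfl, Or.inl rfl⟩)
      · -- the play leaves V : take the first exit point m
        push_neg at hall
        obtain ⟨m0, hm0n, hm0⟩ := hall
        have hexm : ∃ m, ∀ s, ρ' m ≠ Sum.inl s := ⟨m0, hm0⟩
        set m := Nat.find hexm with hmdef
        have hmspec : ∀ s, ρ' m ≠ Sum.inl s := Nat.find_spec hexm
        have hmn : m ≤ n := le_trans (Nat.find_min' hexm hm0) hm0n
        have hmpos : 0 < m := by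
          rcases Nat.eq_zero_or_pos m with h | h
          · exact absurd (h ▸ h0 : ρ' m = Sum.inl u) (hmspec u)
          · exact h
        have hbefore : ∀ i < m, ∃ s, ρ' i = Sum.inl s := by
          intro i hi
          by_contra hcon
          push_neg at hcon
          exact absurd (Nat.find_min' hexm hcon) (Nat.not_le.mpr hi)
        set ρ : ℕ → V := fun i => Sum.elim id (fun _ => u) (ρ' i) with hρdef
        have hρ : ∀ i < m, ρ' i = Sum.inl (ρ i) := by
          intro i hi; obtain ⟨s, hs⟩ := hbefore i hi; rw [hs]; simp [hρdef, hs]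
        have hE' : ∀ i < m - 1, Es (ρ i) (ρ (i+1)) := by
          intro i hi
          have h2 := hE i (by omega)
          rw [hρ i (by omega), hρ (i+1) (by omega)] at h2
          exact h2
        have hC' : ∀ i < m - 1, P1 (ρ i) → ρ (i+1) = σ (ρ i) i := by
          intro i hi hP
          have hne : ρ i ≠ v := fun h => hv (ρ (i+1)) (h ▸ hE' i hi)
          have h2 := hC i (by omega) (by rw [hρ i (by omega)]; exact Or.inl hP)
          rw [hρ i (by omega), hρ (i+1) (by omega)] at h2
          simp only [Sum.elim_inl, if_neg hne, Nat.zero_add] at h2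
          exact Sum.inl_injective h2
        have h0' : ρ 0 = u := by
          have h2 := hρ 0 hmpos
          rw [h0] at h2
          exact (Sum.inl_injective h2).symm
        -- at step m-1 the play is at v with an edge into the gadget
        obtain ⟨j, hj⟩ : ∃ j, ρ' m = Sum.inr j := by
          rcases hmm : ρ' m with s | j
          · exact absurd hmm (hmspec s)
          · exact ⟨j, rfl⟩
        have hedge : incE Es v T (0 + (m-1)) (Sum.inl (ρ (m-1))) (Sum.inr j) := by
          have h2 := hE (m-1) (by omega)
          rw [hρ (m-1) (by omega), show m - 1 + 1 = m by omega, hj] at h2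
          exact h2
        have hρmv : ρ (m-1) = v := (incE_inl_inr hedge).1
        have hstop' : ∀ w, ¬ Es (ρ (m-1)) w := by
          rw [hρmv]; exact hv
        obtain ⟨hTm, hρT⟩ := hfin ρ (m-1) h0' hE' hC' hstop'
        have hTeq : T = m - 1 := by
          rcases lt_or_eq_of_le hTm with hlt | heq
          · exact absurd (hρT ▸ hE' T hlt) (hv _)
          · exact heq
        -- consistency at step m-1 forces the move to w
        have hCm : ρ' m = Sum.inr 0 := by
          have h2 := hC (m-1) (by omega) (by rw [hρ (m-1) (by omega)]; exact Or.inr hρmv)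
          rw [show m - 1 + 1 = m by omega, hρ (m-1) (by omega), hρmv] at h2
          simp only [Sum.elim_inl, Nat.zero_add, if_pos rfl] at h2
          rw [hTeq] at h2
          simp only [if_pos rfl] at h2
          exact h2
        -- now the play is at w at time m = T + 1
        rcases lt_or_eq_of_le hmn with hlt | heq
        · -- m < n : the next move out of w must be ⊤, contradiction
          have he := hE m hlt
          rw [hCm] at he
          obtain ⟨-, j', hj', hj'2⟩ := incE_inr_src he
          rcases hj'2 with h1' | ⟨-, h2'⟩
          · exact hno (m+1) (by omega) (h1' ▸ hj')
          · rw [Nat.zero_add] at h2'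
            omega
        · -- m = n : but w always has an available edge, contradicting the halt
          subst heq
          exact hstop (Sum.inr 1) (by rw [hCm]; exact ⟨rfl, Or.inl rfl⟩)
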